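/- Let U be a unitary n×n matrix in block form with blocks U₁₁ ((n−p)×(n−p)), U₁₂ ((n−p)×p), U₂₁ (p×(n−p)), U₂₂ (p×p). If Ker U₁₂ = {0}, then Ker (U₂₁ − U₂₂ U₁₂^⋆ U₁₁)* = {0}, where U₁₂^⋆ denotes the Moore–Penrose pseudoinverse of U₁₂. -/

import Mathlib

open Matrix

/-- Lemma 3.10: if the block `U₁₂` of a unitary matrix has trivial kernel, then
`(U₂₁ − U₂₂ U₁₂^⋆ U₁₁)*` has trivial kernel, where `U₁₂^⋆` is the Moore–Penrose
pseudoinverse of `U₁₂` (characterized by the four Penrose equations). -/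
theorem kernel_of_adjoint_schur_like_block
    {m p : ℕ}
    (U₁₁ : Matrix (Fin m) (Fin m) ℂ) (U₁₂ : Matrix (Fin m) (Fin p) ℂ)
    (U₂₁ : Matrix (Fin p) (Fin m) ℂ) (U₂₂ : Matrix (Fin p) (Fin p) ℂ)
    (hU : fromBlocks U₁₁ U₁₂ U₂₁ U₂₂ ∈ Matrix.unitaryGroup (Fin m ⊕ Fin p) ℂ)
    (hker : ∀ b : Fin p → ℂ, U₁₂.mulVec b = 0 → b = 0)
    (P : Matrix (Fin p) (Fin m) ℂ)
    (hP1 : U₁₂ * P * U₁₂ = U₁₂) (hP2 : P * U₁₂ * P = P)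
    (hP3 : (P * U₁₂)ᴴ = P * U₁₂) (hP4 : (U₁₂ * P)ᴴ = U₁₂ * P) :
    ∀ c : Fin p → ℂ, (U₂₁ - U₂₂ * P * U₁₁)ᴴ.mulVec c = 0 → c = 0 := by
  -- Step 1: P * U₁₂ = 1
  have hPU : P * U₁₂ = 1 := by
    have hz : ∀ b : Fin p → ℂ, (P * U₁₂ - 1).mulVec b = 0 := by
      intro b
      apply hker
      rw [mulVec_mulVec]
      have h0 : U₁₂ * (P * U₁₂ - 1) = 0 := by
        rw [Matrix.mul_sub, ← Matrix.mul_assoc, hP1, Matrix.mul_one, sub_self]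
      rw [h0, zero_mulVec]
    have hsub : P * U₁₂ - 1 = 0 := by
      ext i j
      have := congr_fun (hz (Pi.single j 1)) i
      rwa [mulVec_single_one, col_apply] at this
    exact sub_eq_zero.mp hsub
  have hPUc : U₁₂ᴴ * Pᴴ = 1 := by
    have := congrArg conjTranspose hPU
    simpa [conjTranspose_mul] using this
  -- Step 2: block equations from U * Uᴴ = 1
  have hUU : fromBlocks U₁₁ U₁₂ U₂₁ U₂₂ * (fromBlocks U₁₁ U₁₂ U₂₁ U₂₂)ᴴ = 1 :=
    mem_unitaryGroup_iff.mp hU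
  rw [fromBlocks_conjTranspose, fromBlocks_multiply, ← fromBlocks_one] at hUU
  have h11 : U₁₁ * U₁₁ᴴ + U₁₂ * U₁₂ᴴ = 1 := by
    have := congrArg Matrix.toBlocks₁₁ hUU
    simpa only [toBlocks_fromBlocks₁₁] using this
  have h21 : U₂₁ * U₁₁ᴴ + U₂₂ * U₁₂ᴴ = 0 := by
    have := congrArg Matrix.toBlocks₂₁ hUU
    simpa only [toBlocks_fromBlocks₂₁] using this
  have h22 : U₂₁ * U₂₁ᴴ + U₂₂ * U₂₂ᴴ = 1 := by
    have := congrArg Matrix.toBlocks₂₂ hUU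
    simpa only [toBlocks_fromBlocks₂₂] using this
  have hA : U₂₁ * U₁₁ᴴ = -(U₂₂ * U₁₂ᴴ) := by
    rw [← sub_eq_zero, sub_neg_eq_add]; exact h21
  have hAc : U₁₁ * U₂₁ᴴ = -(U₁₂ * U₂₂ᴴ) := by
    have := congrArg conjTranspose hA
    simpa [conjTranspose_mul, conjTranspose_neg] using this
  have hB : U₁₁ * U₁₁ᴴ = 1 - U₁₂ * U₁₂ᴴ := by
    rw [eq_sub_iff_add_eq]; exact h11
  have hC : U₂₁ * U₂₁ᴴ = 1 - U₂₂ * U₂₂ᴴ := by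
    rw [eq_sub_iff_add_eq]; exact h22
  -- Step 3: key identity  S * Sᴴ = 1 + (U₂₂P)(U₂₂P)ᴴ
  set S : Matrix (Fin p) (Fin m) ℂ := U₂₁ - U₂₂ * P * U₁₁ with hS
  have hSH : Sᴴ = U₂₁ᴴ - U₁₁ᴴ * Pᴴ * U₂₂ᴴ := by
    rw [hS]; simp [conjTranspose_sub, conjTranspose_mul, Matrix.mul_assoc]
  have e1 : U₂₁ * (U₁₁ᴴ * Pᴴ * U₂₂ᴴ) = -(U₂₂ * U₂₂ᴴ) :=
    calc U₂₁ * (U₁₁ᴴ * Pᴴ * U₂₂ᴴ) = U₂₁ * U₁₁ᴴ * (Pᴴ * U₂₂ᴴ) := by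
          simp only [Matrix.mul_assoc]
      _ = -(U₂₂ * U₁₂ᴴ) * (Pᴴ * U₂₂ᴴ) := by rw [hA]
      _ = -(U₂₂ * (U₁₂ᴴ * Pᴴ) * U₂₂ᴴ) := by
          simp only [Matrix.neg_mul, Matrix.mul_assoc]
      _ = -(U₂₂ * U₂₂ᴴ) := by rw [hPUc, Matrix.mul_one]
  have e2 : U₂₂ * P * U₁₁ * U₂₁ᴴ = -(U₂₂ * U₂₂ᴴ) :=
    calc U₂₂ * P * U₁₁ * U₂₁ᴴ = U₂₂ * P * (U₁₁ * U₂₁ᴴ) := by rw [Matrix.mul_assoc]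
      _ = U₂₂ * P * (-(U₁₂ * U₂₂ᴴ)) := by rw [hAc]
      _ = -(U₂₂ * (P * U₁₂) * U₂₂ᴴ) := by
          simp only [Matrix.mul_neg, Matrix.mul_assoc]
      _ = -(U₂₂ * U₂₂ᴴ) := by rw [hPU, Matrix.mul_one]
  have e3 : U₂₂ * P * U₁₁ * (U₁₁ᴴ * Pᴴ * U₂₂ᴴ) = U₂₂ * P * Pᴴ * U₂₂ᴴ - U₂₂ * U₂₂ᴴ :=
    calc U₂₂ * P * U₁₁ * (U₁₁ᴴ * Pᴴ * U₂₂ᴴ)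
        = U₂₂ * P * (U₁₁ * U₁₁ᴴ) * (Pᴴ * U₂₂ᴴ) := by simp only [Matrix.mul_assoc]
      _ = U₂₂ * P * (1 - U₁₂ * U₁₂ᴴ) * (Pᴴ * U₂₂ᴴ) := by rw [hB]
      _ = U₂₂ * P * (Pᴴ * U₂₂ᴴ) - U₂₂ * (P * U₁₂) * ((U₁₂ᴴ * Pᴴ) * U₂₂ᴴ) := by
          simp only [Matrix.mul_sub, Matrix.sub_mul, Matrix.mul_one, Matrix.one_mul,
            Matrix.mul_assoc]
      _ = U₂₂ * P * Pᴴ * U₂₂ᴴ - U₂₂ * U₂₂ᴴ := by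
          rw [hPU, hPUc, Matrix.mul_one, Matrix.one_mul]
          simp only [Matrix.mul_assoc]
  have hQ : (U₂₂ * P) * (U₂₂ * P)ᴴ = U₂₂ * P * Pᴴ * U₂₂ᴴ := by
    rw [conjTranspose_mul]; simp only [Matrix.mul_assoc]
  have key : S * Sᴴ = 1 + (U₂₂ * P) * (U₂₂ * P)ᴴ := by
    rw [hSH, hS, Matrix.sub_mul, Matrix.mul_sub, Matrix.mul_sub, hC, e1, e2, e3, hQ]
    abel
  -- Step 4: conclude
  intro c hc
  have hzero : (1 + (U₂₂ * P) * (U₂₂ * P)ᴴ).mulVec c = 0 := by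
    rw [← key, ← mulVec_mulVec, hc, mulVec_zero]
  have hexp : c + (U₂₂ * P).mulVec ((U₂₂ * P)ᴴ.mulVec c) = 0 := by
    rw [mulVec_mulVec]
    simpa [Matrix.add_mulVec, one_mulVec] using hzero
  have hstar : star c ᵥ* (U₂₂ * P) = star ((U₂₂ * P)ᴴ.mulVec c) := by
    rw [star_mulVec, conjTranspose_conjTranspose]
  have hdot : star c ⬝ᵥ c + star ((U₂₂ * P)ᴴ.mulVec c) ⬝ᵥ ((U₂₂ * P)ᴴ.mulVec c) = 0 := by
    have h := congrArg (fun v => star c ⬝ᵥ v) hexp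
    simp only [dotProduct_add, dotProduct_zero] at h
    rw [dotProduct_mulVec, hstar] at h
    exact h
  have hcast : ∀ {k : ℕ} (v : Fin k → ℂ),
      star v ⬝ᵥ v = ((∑ i, Complex.normSq (v i) : ℝ) : ℂ) := by
    intro k v
    simp [dotProduct, Complex.normSq_eq_conj_mul_self]
  rw [hcast, hcast, ← Complex.ofReal_add, Complex.ofReal_eq_zero] at hdot
  have hsum : ∑ i, Complex.normSq (c i) = 0 := by
    have h1 : (0:ℝ) ≤ ∑ i, Complex.normSq (c i) :=
      Finset.sum_nonneg fun i _ => Complex.normSq_nonneg _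
    have h2 : (0:ℝ) ≤ ∑ i, Complex.normSq (((U₂₂ * P)ᴴ.mulVec c) i) :=
      Finset.sum_nonneg fun i _ => Complex.normSq_nonneg _
    linarith
  funext i
  have := (Finset.sum_eq_zero_iff_of_nonneg
    (fun i _ => Complex.normSq_nonneg (c i))).mp hsum i (Finset.mem_univ i)
  exact Complex.normSq_eq_zero.mp this
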